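/- arXiv:2604.20400 — 4 statements merged into one kernel-verified Lean document; each statement's English description precedes it below -/
import Mathlib

section
/- Let β be a fixed nonzero real number. There is a constant C > 0 (depending only on β) such that for all real L ≥ 1 and X ≥ 1, the number of pairs (l₁, l₂) of integers with L < l₁, l₂ ≤ 2L satisfying |(L/l₁)^β − (L/l₂)^β| ≤ 1/X is at most C · L² · (1/L + 1/X). -/
open Finset Real

lemma rpow_gap (β : ℝ) (hβ : β ≠ 0) :
    ∃ m > 0, ∀ x y : ℝ, 1/2 ≤ x → x ≤ 1 → 1/2 ≤ y → y ≤ 1 →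
      m * |x - y| ≤ |x ^ β - y ^ β| := by
  set m₀ : ℝ := min ((1/2 : ℝ) ^ (β - 1)) 1 with hm₀
  have hm₀pos : 0 < m₀ := lt_min (Real.rpow_pos_of_pos (by norm_num) _) one_pos
  have hlow : ∀ t : ℝ, 1/2 ≤ t → t ≤ 1 → m₀ ≤ t ^ (β - 1) := by
    intro t ht1 ht2
    rcases le_or_gt 0 (β - 1) with h | h
    · exact le_trans (min_le_left _ _) (Real.rpow_le_rpow (by norm_num) ht1 h)
    · exact le_trans (min_le_right _ _)
        (Real.one_le_rpow_of_pos_of_le_one_of_nonpos (by linarith) ht2 h.le)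
  refine ⟨|β| * m₀, mul_pos (abs_pos.mpr hβ) hm₀pos, ?_⟩
  have key : ∀ x y : ℝ, 1/2 ≤ x → x ≤ 1 → 1/2 ≤ y → y ≤ 1 → x < y →
      |β| * m₀ * |x - y| ≤ |x ^ β - y ^ β| := by
    intro x y hx1 hx2 hy1 hy2 hxy
    have hxpos : (0:ℝ) < x := by linarith
    have hderiv : ∀ t ∈ Set.Ioo x y, HasDerivAt (fun t : ℝ => t ^ β) (β * t ^ (β - 1)) t := by
      intro t ht
      exact Real.hasDerivAt_rpow_const (Or.inl (by nlinarith [ht.1] : t ≠ 0))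
    have hcont : ContinuousOn (fun t : ℝ => t ^ β) (Set.Icc x y) := by
      apply ContinuousOn.rpow_const continuousOn_id
      intro t ht
      exact Or.inl (by simp only [id]; nlinarith [ht.1])
    obtain ⟨c, hc, hceq⟩ := exists_hasDerivAt_eq_slope (fun t : ℝ => t ^ β)
      (fun t => β * t ^ (β - 1)) hxy hcont hderiv
    have hc1 : 1/2 ≤ c := by linarith [hc.1]
    have hc2 : c ≤ 1 := by linarith [hc.2]
    have hcl := hlow c hc1 hc2
    have hslope : y ^ β - x ^ β = β * c ^ (β - 1) * (y - x) := by
      rw [eq_div_iff (by intro h; apply absurd h; intro h; nlinarith : y - x ≠ 0)] at hceq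
      linarith [hceq]
    have habs : |x ^ β - y ^ β| = |β| * c ^ (β - 1) * (y - x) := by
      rw [abs_sub_comm, hslope, abs_mul, abs_mul, abs_of_nonneg (by linarith : (0:ℝ) ≤ y - x),
        abs_of_pos (Real.rpow_pos_of_pos (by linarith [hc.1] : (0:ℝ) < c) _)]
    rw [habs, abs_of_nonpos (show x - y ≤ 0 by linarith), neg_sub]
    have : |β| * m₀ ≤ |β| * c ^ (β - 1) :=
      mul_le_mul_of_nonneg_left hcl (abs_nonneg β)
    exact mul_le_mul_of_nonneg_right this (by linarith)
  intro x y hx1 hx2 hy1 hy2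
  rcases lt_trichotomy x y with h | h | h
  · exact key x y hx1 hx2 hy1 hy2 h
  · simp [h]
  · rw [abs_sub_comm, abs_sub_comm (x^β)]
    exact key y x hy1 hy2 hx1 hx2 h

theorem spacing_count_inverse_power (β : ℝ) (hβ : β ≠ 0) :
    ∃ C > 0, ∀ L X : ℝ, 1 ≤ L → 1 ≤ X →
      (((Finset.Ioc ⌊L⌋₊ ⌊2 * L⌋₊ ×ˢ Finset.Ioc ⌊L⌋₊ ⌊2 * L⌋₊).filter
          (fun p => |(L / (p.1 : ℝ)) ^ β - (L / (p.2 : ℝ)) ^ β| ≤ 1 / X)).card : ℝ)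
        ≤ C * L ^ 2 * (1 / L + 1 / X) := by
  obtain ⟨m, hm, hgap⟩ := rpow_gap β hβ
  refine ⟨16/m + 6, by positivity, ?_⟩
  intro L X hL hX
  have hL0 : (0:ℝ) < L := by linarith
  have hX0 : (0:ℝ) < X := by linarith
  set a := ⌊L⌋₊ with ha
  set b := ⌊2 * L⌋₊ with hb
  set K : ℝ := 4*L/(m*X) with hK
  have hK0 : 0 ≤ K := by positivity
  set S := ((Finset.Ioc a b ×ˢ Finset.Ioc a b).filter
      (fun p => |(L / (p.1 : ℝ)) ^ β - (L / (p.2 : ℝ)) ^ β| ≤ 1 / X)) with hS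
  -- membership facts
  have hmem : ∀ l : ℕ, l ∈ Finset.Ioc a b → L < (l:ℝ) ∧ (l:ℝ) ≤ 2*L := by
    intro l hl
    rw [Finset.mem_Ioc] at hl
    constructor
    · calc L < (a:ℝ) + 1 := Nat.lt_floor_add_one L
        _ ≤ (l:ℝ) := by exact_mod_cast Nat.succ_le_of_lt hl.1
    · calc (l:ℝ) ≤ (b:ℝ) := by exact_mod_cast hl.2
        _ ≤ 2*L := Nat.floor_le (by linarith)
  -- key spacing fact
  have hdiff : ∀ p ∈ S, |(p.1:ℝ) - (p.2:ℝ)| ≤ K := by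
    intro p hp
    rw [hS, Finset.mem_filter, Finset.mem_product] at hp
    obtain ⟨⟨h1, h2⟩, hcond⟩ := hp
    obtain ⟨h1a, h1b⟩ := hmem _ h1
    obtain ⟨h2a, h2b⟩ := hmem _ h2
    have hp1 : (0:ℝ) < (p.1:ℝ) := by linarith
    have hp2 : (0:ℝ) < (p.2:ℝ) := by linarith
    have hx1 : (1:ℝ)/2 ≤ L / p.1 := by rw [div_le_div_iff₀ (by norm_num) hp1]; linarith
    have hx2 : L / (p.1:ℝ) ≤ 1 := by rw [div_le_one hp1]; linarith
    have hy1 : (1:ℝ)/2 ≤ L / p.2 := by rw [div_le_div_iff₀ (by norm_num) hp2]; linarith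
    have hy2 : L / (p.2:ℝ) ≤ 1 := by rw [div_le_one hp2]; linarith
    have hg := (hgap _ _ hx1 hx2 hy1 hy2).trans hcond
    have he : L/(p.1:ℝ) - L/(p.2:ℝ) = L * ((p.2:ℝ) - p.1) / (p.1 * p.2) := by
      field_simp
    rw [he, abs_div, abs_mul, abs_of_pos hL0, abs_of_pos (mul_pos hp1 hp2),
      abs_sub_comm ((p.2:ℝ))] at hg
    -- hg : m * (L * |p.1 - p.2| / (p.1*p.2)) ≤ 1/X
    have hprod : (p.1:ℝ) * p.2 ≤ 4 * L^2 := by nlinarith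
    rw [hK, le_div_iff₀ (by positivity)]
    rw [show m * (L * |(p.1:ℝ) - p.2| / ((p.1:ℝ) * p.2)) = m * L * |(p.1:ℝ) - p.2| / ((p.1:ℝ)*p.2) from by ring,
      div_le_div_iff₀ (mul_pos hp1 hp2) hX0] at hg
    nlinarith [abs_nonneg ((p.1:ℝ) - p.2), mul_pos hp1 hp2, hg, hprod, hL0]
  -- counting
  have hab : a ≤ b := Nat.floor_le_floor (by linarith)
  have hcard : S.card ≤ (2*⌈K⌉₊+1) * (b - a) := by
    have h1 : S.card ≤ (2*⌈K⌉₊+1) * (S.image Prod.fst).card := by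
      apply Finset.card_le_mul_card_image
      intro x hx
      apply Finset.card_le_card_of_injOn (fun p => p.2)
        (t := Finset.Icc (x - ⌈K⌉₊) (x + ⌈K⌉₊)) ?_ ?_ |>.trans
      · rw [Nat.card_Icc]; omega
      · intro p hp
        rw [Finset.mem_coe, Finset.mem_filter] at hp
        have hd := hdiff p hp.1
        rw [hp.2] at hd
        have hKle : K ≤ (⌈K⌉₊:ℝ) := Nat.le_ceil K
        rw [abs_le] at hd
        rw [Finset.mem_coe, Finset.mem_Icc]
        constructor
        · rw [Nat.sub_le_iff_le_add]
          have : (x:ℝ) ≤ (p.2:ℝ) + ⌈K⌉₊ := by linarith [hd.1]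
          exact_mod_cast this
        · have : (p.2:ℝ) ≤ (x:ℝ) + ⌈K⌉₊ := by linarith [hd.2]
          exact_mod_cast this
      · intro p hp q hq hpq
        rw [Finset.mem_coe, Finset.mem_filter] at hp hq
        exact Prod.ext (hp.2.trans hq.2.symm) hpq
    have h2 : (S.image Prod.fst).card ≤ b - a := by
      rw [← Nat.card_Ioc]
      apply Finset.card_le_card
      intro x hx
      rw [Finset.mem_image] at hx
      obtain ⟨p, hp, hpx⟩ := hx
      rw [hS, Finset.mem_filter, Finset.mem_product] at hp
      exact hpx ▸ hp.1.1
    calc S.card ≤ (2*⌈K⌉₊+1) * (S.image Prod.fst).card := h1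
      _ ≤ (2*⌈K⌉₊+1) * (b - a) := Nat.mul_le_mul_left _ h2
  -- cast and conclude
  have hcastR : (S.card : ℝ) ≤ (2*(⌈K⌉₊:ℝ)+1) * ((b:ℝ) - a) := by
    have := (Nat.cast_le (α := ℝ)).mpr hcard
    rwa [Nat.cast_mul, Nat.cast_sub hab, Nat.cast_add, Nat.cast_mul, Nat.cast_ofNat,
      Nat.cast_one] at this
  have hceil : (⌈K⌉₊:ℝ) ≤ K + 1 := (Nat.ceil_lt_add_one hK0).le
  have hba : (b:ℝ) - a ≤ 2*L := by
    have h1 : (b:ℝ) ≤ 2*L := Nat.floor_le (by linarith)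
    have h2 : L - 1 < (a:ℝ) := by linarith [Nat.lt_floor_add_one L]
    linarith
  have hstep : (S.card : ℝ) ≤ (2*K+3) * (2*L) := by
    calc (S.card : ℝ) ≤ (2*(⌈K⌉₊:ℝ)+1) * ((b:ℝ) - a) := hcastR
      _ ≤ (2*K+3) * (2*L) := by
          apply mul_le_mul (by linarith) hba ?_ (by linarith)
          have h2 : (a:ℝ) ≤ b := by exact_mod_cast hab
          linarith
  have hfin : (2*K+3) * (2*L) ≤ (16/m + 6) * L^2 * (1/L + 1/X) := by
    have h1 : (2*K+3) * (2*L) = 16*L^2/(m*X) + 6*L := by rw [hK]; field_simp; ring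
    have h2 : (16/m + 6) * L^2 * (1/L + 1/X) = 16*L^2/(m*X) + 6*L^2/X + 16*L/m + 6*L := by
      field_simp; ring
    rw [h1, h2]
    have h3 : 0 ≤ 6*L^2/X := by positivity
    have h4 : 0 ≤ 16*L/m := by positivity
    linarith
  exact hstep.trans hfin
end

section
/- Let z₁, …, z_N be complex numbers and define |∑_{1≤n≤N} z_n|* = max over 1 ≤ N₁ ≤ N₂ ≤ N of |∑_{n=N₁}^{N₂} z_n|. Then for every real k ≥ 1, (|∑_{1≤n≤N} z_n|*)^k ≤ (1 + log N)^{k−1} · ∫_{−1/2}^{1/2} |∑_{n=1}^{N} z_n e(nt)|^k · 𝓛(t) dt, where 𝓛(t) = min{N, 1/(2|t|)} and e(x) = e^{2πix}. -/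
open Finset Real MeasureTheory intervalIntegral Complex

noncomputable section AuxMaximal

private def Lk (N : ℕ) (t : ℝ) : ℝ := min (N : ℝ) (1 / (2 * |t|))

private lemma Lk_nonneg (N : ℕ) (t : ℝ) : 0 ≤ Lk N t :=
  le_min (Nat.cast_nonneg _) (by positivity)

private lemma Lk_le (N : ℕ) (t : ℝ) : Lk N t ≤ N := min_le_left _ _

private lemma Lk_measurable (N : ℕ) : Measurable (Lk N) := by
  unfold Lk; fun_prop

/-- orthogonality -/
private lemma orth (d : ℤ) :
    (∫ t in (-(1:ℝ)/2)..(1/2), Complex.exp (2 * Real.pi * Complex.I * d * t)) =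
      if d = 0 then 1 else 0 := by
  rcases eq_or_ne d 0 with rfl | hd
  · norm_num
  · rw [if_neg hd]
    have hc : (2 * (Real.pi:ℂ) * Complex.I * d) ≠ 0 := by
      simp [Real.pi_ne_zero, Complex.I_ne_zero, hd]
    have := integral_exp_mul_complex (a := -(1:ℝ)/2) (b := 1/2) hc
    rw [this]
    have key : Complex.exp (2 * (Real.pi:ℂ) * Complex.I * d * (((1:ℝ)/2 : ℝ) : ℂ))
        = Complex.exp (2 * (Real.pi:ℂ) * Complex.I * d * (((-(1:ℝ)/2 : ℝ)) : ℂ)) := by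
      have h' : (2 * (Real.pi:ℂ) * Complex.I * d * (((1:ℝ)/2 : ℝ) : ℂ))
          = 2 * (Real.pi:ℂ) * Complex.I * d * (((-(1:ℝ)/2 : ℝ)) : ℂ) + d * (2 * Real.pi * Complex.I) := by
        push_cast; ring
      rw [h', Complex.exp_add, Complex.exp_int_mul_two_pi_mul_I, mul_one]
    rw [key, sub_self, zero_div]

/-- norm of exp(θI) - 1 -/
private lemma norm_exp_sub_one (θ : ℝ) :
    ‖Complex.exp (θ * Complex.I) - 1‖ = 2 * |Real.sin (θ / 2)| := by
  have h1 : Complex.exp (θ * Complex.I) - 1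
      = ((Real.cos θ - 1 : ℝ) : ℂ) + ((Real.sin θ : ℝ) : ℂ) * Complex.I := by
    rw [Complex.exp_mul_I]; push_cast; ring
  rw [h1, Complex.norm_def, Complex.normSq_add_mul_I]
  rw [Real.abs_sin_half]
  rw [show ((Real.cos θ - 1)^2 + Real.sin θ^2) = 4 * ((1 - Real.cos θ)/2) by
    have := Real.sin_sq_add_cos_sq θ; nlinarith]
  rw [Real.sqrt_mul (by norm_num : (0:ℝ) ≤ 4),
    show (4:ℝ) = 2^2 by norm_num, Real.sqrt_sq (by norm_num : (0:ℝ) ≤ 2)]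

/-- kernel bound -/
private lemma kernel_bound (N N₁ N₂ : ℕ) (h1 : 1 ≤ N₁) (h2 : N₂ ≤ N) {t : ℝ}
    (ht : t ∈ Set.Ioc (-(1:ℝ)/2) (1/2)) (ht0 : t ≠ 0) :
    ‖∑ m ∈ Finset.Icc N₁ N₂, Complex.exp (-(2 * Real.pi * Complex.I * (m * t)))‖ ≤ Lk N t := by
  have htle : |t| ≤ 1/2 := abs_le.mpr ⟨by linarith [ht.1], ht.2⟩
  have ht0' : 0 < |t| := abs_pos.mpr ht0
  set w : ℂ := Complex.exp (((-(2 * Real.pi * t) : ℝ) : ℂ) * Complex.I) with hw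
  have hterm : ∀ m : ℕ, Complex.exp (-(2 * Real.pi * Complex.I * (m * t))) = w ^ m := by
    intro m
    rw [hw, ← Complex.exp_nat_mul]
    congr 1
    push_cast; ring
  have hwnorm : ‖w‖ = 1 := by rw [hw]; exact Complex.norm_exp_ofReal_mul_I _
  -- norm of w - 1
  have hw1 : ‖w - 1‖ = 2 * |Real.sin (Real.pi * t)| := by
    rw [hw, norm_exp_sub_one]
    congr 1
    rw [show -(2 * Real.pi * t) / 2 = -(Real.pi * t) by ring, Real.sin_neg, abs_neg]
  -- sin lower bound
  have habs : |Real.sin (Real.pi * t)| = Real.sin (Real.pi * |t|) := by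
    have hnn : 0 ≤ Real.sin (Real.pi * |t|) :=
      Real.sin_nonneg_of_nonneg_of_le_pi (by positivity)
        (by nlinarith [Real.pi_pos])
    rcases le_or_gt 0 t with h | h
    · rw [_root_.abs_of_nonneg h] at hnn ⊢
      rw [_root_.abs_of_nonneg hnn]
    · rw [_root_.abs_of_neg h] at hnn
      rw [mul_neg, Real.sin_neg] at hnn
      rw [_root_.abs_of_nonpos (by linarith), _root_.abs_of_neg h, mul_neg, Real.sin_neg]
  have hsin : 2 * |t| ≤ |Real.sin (Real.pi * t)| := by
    rw [habs]
    have := Real.mul_le_sin (x := Real.pi * |t|) (by positivity)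
      (by nlinarith [Real.pi_pos])
    calc 2 * |t| = 2 / Real.pi * (Real.pi * |t|) := by
          field_simp
      _ ≤ Real.sin (Real.pi * |t|) := this
  have hsinpos : 0 < |Real.sin (Real.pi * t)| := lt_of_lt_of_le (by linarith) hsin
  have hwne : w ≠ 1 := by
    intro h
    rw [h, sub_self, norm_zero] at hw1
    linarith
  -- rewrite sum
  simp only [hterm]
  -- bound 1 : ≤ N
  have bound1 : ‖∑ m ∈ Finset.Icc N₁ N₂, w ^ m‖ ≤ (N : ℝ) := by
    calc ‖∑ m ∈ Finset.Icc N₁ N₂, w ^ m‖ ≤ ∑ m ∈ Finset.Icc N₁ N₂, ‖w ^ m‖ :=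
          norm_sum_le _ _
      _ = ∑ m ∈ Finset.Icc N₁ N₂, 1 := by
          refine Finset.sum_congr rfl fun m _ => ?_
          rw [norm_pow, hwnorm, one_pow]
      _ = ((Finset.Icc N₁ N₂).card : ℝ) := by simp
      _ ≤ (N : ℝ) := by
          have : (Finset.Icc N₁ N₂).card ≤ N := by rw [Nat.card_Icc]; omega
          exact_mod_cast this
  -- bound 2 : ≤ 1/(2|t|)
  have bound2 : ‖∑ m ∈ Finset.Icc N₁ N₂, w ^ m‖ ≤ 1 / (2 * |t|) := by
    have hgeom : ∑ m ∈ Finset.Icc N₁ N₂, w ^ m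
        = w ^ N₁ * ((w ^ (N₂ + 1 - N₁) - 1) / (w - 1)) := by
      rw [← Finset.Ico_add_one_right_eq_Icc, Finset.sum_Ico_eq_sum_range]
      rw [← geom_sum_eq hwne]
      rw [Finset.mul_sum]
      exact Finset.sum_congr rfl fun i _ => by rw [pow_add]
    rw [hgeom, norm_mul, norm_pow, hwnorm, one_pow, one_mul, norm_div]
    have hnum : ‖w ^ (N₂ + 1 - N₁) - 1‖ ≤ 2 := by
      calc ‖w ^ (N₂ + 1 - N₁) - 1‖ ≤ ‖w ^ (N₂ + 1 - N₁)‖ + ‖(1:ℂ)‖ := norm_sub_le _ _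
        _ = 2 := by rw [norm_pow, hwnorm, one_pow, norm_one]; norm_num
    have hwpos : 0 < ‖w - 1‖ := by rw [hw1]; linarith
    calc ‖w ^ (N₂ + 1 - N₁) - 1‖ / ‖w - 1‖ ≤ 2 / ‖w - 1‖ := by
          gcongr
      _ = 2 / (2 * |Real.sin (Real.pi * t)|) := by rw [hw1]
      _ ≤ 1 / (2 * |t|) := by
          rw [div_le_div_iff₀ (by positivity) (by positivity)]
          nlinarith
  exact le_min bound1 bound2

private lemma Lk_intervalIntegrable (N : ℕ) (a b : ℝ) :
    IntervalIntegrable (Lk N) MeasureTheory.volume a b := by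
  apply (_root_.intervalIntegrable_const (c := (N:ℝ))).mono_fun
    ((Lk_measurable N).aestronglyMeasurable.restrict)
  refine Filter.Eventually.of_forall fun t => ?_
  show ‖Lk N t‖ ≤ |(N:ℝ)|
  rw [Real.norm_eq_abs, _root_.abs_of_nonneg (Lk_nonneg N t), _root_.abs_of_nonneg (Nat.cast_nonneg N)]
  exact Lk_le N t

/-- total mass -/
private lemma Lk_integral (N : ℕ) (hN : 1 ≤ N) :
    (∫ t in (-(1:ℝ)/2)..(1/2), Lk N t) = 1 + Real.log N := by
  have hN0 : (0:ℝ) < N := by exact_mod_cast hN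
  set c : ℝ := 1 / (2 * N) with hc
  have hc0 : 0 < c := by positivity
  have hN1 : (1:ℝ) ≤ N := by exact_mod_cast hN
  have hcle : c ≤ 1/2 := by
    rw [hc, div_le_div_iff₀ (by positivity) (by norm_num)]
    nlinarith
  have hright : (∫ t in c..(1/2), Lk N t) = (1/2) * Real.log N := by
    have heq : Set.EqOn (Lk N) (fun t => (1/2) * (1/t)) (Set.uIcc c (1/2)) := by
      intro t ht
      rw [Set.uIcc_of_le hcle] at ht
      have ht0 : 0 < t := lt_of_lt_of_le hc0 ht.1
      have : Lk N t = 1 / (2 * |t|) := by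
        apply min_eq_right
        rw [_root_.abs_of_pos ht0, div_le_iff₀ (by positivity)]
        rw [hc] at ht
        have := ht.1
        rw [div_le_iff₀ (by positivity)] at this
        nlinarith
      rw [this, _root_.abs_of_pos ht0]
      field_simp
    rw [intervalIntegral.integral_congr heq, intervalIntegral.integral_const_mul,
      integral_one_div (by
        intro h
        rw [Set.uIcc_of_le hcle] at h
        exact absurd h.1 (not_le.mpr hc0))]
    congr 1
    rw [hc]
    rw [show (1:ℝ)/2 / (1 / (2 * N)) = N by field_simp]
  have hleft : (∫ t in (-(1:ℝ)/2)..(-c), Lk N t) = (1/2) * Real.log N := by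
    have : (∫ t in c..(1/2), Lk N (-t)) = ∫ t in (-(1/2):ℝ)..(-c), Lk N t :=
      intervalIntegral.integral_comp_neg (Lk N)
    rw [show (-(1:ℝ)/2) = (-(1/2):ℝ) by norm_num, ← this, ← hright]
    apply intervalIntegral.integral_congr
    intro t _
    simp only [Lk, abs_neg]
  have hmid : (∫ t in (-c)..c, Lk N t) = 1 := by
    have hae : ∀ᵐ t ∂(MeasureTheory.volume : MeasureTheory.Measure ℝ),
        t ∈ Set.uIoc (-c) c → Lk N t = (N:ℝ) := by
      have h0 : (MeasureTheory.volume : MeasureTheory.Measure ℝ) {0} = 0 :=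
        MeasureTheory.measure_singleton 0
      filter_upwards [MeasureTheory.measure_eq_zero_iff_ae_notMem.mp h0] with t ht htm
      have ht0 : t ≠ 0 := by simpa using ht
      rw [Set.uIoc_of_le (by linarith : -c ≤ c)] at htm
      have habs : |t| ≤ c := abs_le.mpr ⟨le_of_lt htm.1, htm.2⟩
      apply min_eq_left
      rw [le_div_iff₀ (by positivity : 0 < 2 * |t|)]
      rw [hc] at habs
      have h2 : 0 < |t| := abs_pos.mpr ht0
      rw [le_div_iff₀ (by positivity)] at habs
      nlinarith
    rw [intervalIntegral.integral_congr_ae hae, intervalIntegral.integral_const]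
    rw [smul_eq_mul, hc]
    field_simp
    norm_num
  have add1 := intervalIntegral.integral_add_adjacent_intervals
    (Lk_intervalIntegrable N (-(1:ℝ)/2) (-c)) (Lk_intervalIntegrable N (-c) c)
  have add2 := intervalIntegral.integral_add_adjacent_intervals
    (IntervalIntegrable.trans (Lk_intervalIntegrable N (-(1:ℝ)/2) (-c))
      (Lk_intervalIntegrable N (-c) c)) (Lk_intervalIntegrable N c (1/2))
  rw [← add2, ← add1, hleft, hmid, hright]
  ring

private lemma mul_Lk_integrableOn (N : ℕ) {f : ℝ → ℝ} (hf : Continuous f) :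
    MeasureTheory.IntegrableOn (fun t => Lk N t * f t)
      (Set.Ioc (-(1:ℝ)/2) (1/2)) := by
  apply MeasureTheory.Integrable.mono'
    (g := fun t => (N : ℝ) * |f t|)
    ((continuous_const.mul hf.abs).integrableOn_Ioc)
    (((Lk_measurable N).mul hf.measurable).aestronglyMeasurable.restrict)
  refine Filter.Eventually.of_forall fun t => ?_
  rw [Real.norm_eq_abs, Pi.mul_apply, abs_mul, _root_.abs_of_nonneg (Lk_nonneg N t)]
  exact mul_le_mul_of_nonneg_right (Lk_le N t) (abs_nonneg _)

set_option maxHeartbeats 1000000 in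
private lemma key_identity (N : ℕ) (z : ℕ → ℂ) (N₁ N₂ : ℕ)
    (h1 : 1 ≤ N₁) (h12 : N₁ ≤ N₂) (h2 : N₂ ≤ N) :
    ∑ n ∈ Finset.Icc N₁ N₂, z n =
      ∫ t in (-(1:ℝ)/2)..(1/2),
        (∑ n ∈ Finset.Icc 1 N, z n * Complex.exp (2 * Real.pi * Complex.I * (n * t))) *
          (∑ m ∈ Finset.Icc N₁ N₂, Complex.exp (-(2 * Real.pi * Complex.I * (m * t)))) := by
  have expand : ∀ t : ℝ,
      (∑ n ∈ Finset.Icc 1 N, z n * Complex.exp (2 * Real.pi * Complex.I * (n * t))) *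
        (∑ m ∈ Finset.Icc N₁ N₂, Complex.exp (-(2 * Real.pi * Complex.I * (m * t)))) =
      ∑ n ∈ Finset.Icc 1 N, ∑ m ∈ Finset.Icc N₁ N₂,
        z n * Complex.exp (2 * Real.pi * Complex.I * (((n : ℤ) - (m : ℤ) : ℤ) : ℂ) * t) := by
    intro t
    rw [Finset.sum_mul]
    refine Finset.sum_congr rfl fun n _ => ?_
    rw [Finset.mul_sum]
    refine Finset.sum_congr rfl fun m _ => ?_
    rw [mul_assoc, ← Complex.exp_add]
    congr 2
    push_cast
    ring
  have hcont : ∀ (n m : ℕ), Continuous fun t : ℝ =>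
      z n * Complex.exp (2 * Real.pi * Complex.I * (((n : ℤ) - (m : ℤ) : ℤ) : ℂ) * t) := by
    intro n m
    exact continuous_const.mul (Complex.continuous_exp.comp (continuous_const.mul
      Complex.continuous_ofReal))
  calc ∑ n ∈ Finset.Icc N₁ N₂, z n
      = ∑ n ∈ Finset.Icc 1 N, ∑ m ∈ Finset.Icc N₁ N₂,
          z n * ∫ t in (-(1:ℝ)/2)..(1/2),
            Complex.exp (2 * Real.pi * Complex.I * (((n : ℤ) - (m : ℤ) : ℤ) : ℂ) * t) := by
        have : ∀ n ∈ Finset.Icc 1 N, ∀ m ∈ Finset.Icc N₁ N₂,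
            z n * (∫ t in (-(1:ℝ)/2)..(1/2),
              Complex.exp (2 * Real.pi * Complex.I * (((n : ℤ) - (m : ℤ) : ℤ) : ℂ) * t))
            = if n = m then z n else 0 := by
          intro n _ m _
          rw [orth ((n : ℤ) - (m : ℤ))]
          by_cases h : n = m
          · simp [h]
          · rw [if_neg (by simpa [sub_eq_zero] using fun hh => h (by exact_mod_cast hh)),
              if_neg h, mul_zero]
        rw [Finset.sum_congr rfl fun n hn => Finset.sum_congr rfl fun m hm => this n hn m hm]
        rw [Finset.sum_congr rfl fun n _ => Finset.sum_ite_eq (Finset.Icc N₁ N₂) n (fun m => z n)]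
        rw [Finset.sum_ite_mem]
        congr 1
        exact (Finset.inter_eq_right.mpr (Finset.Icc_subset_Icc h1 h2)).symm
    _ = ∑ n ∈ Finset.Icc 1 N, ∫ t in (-(1:ℝ)/2)..(1/2), ∑ m ∈ Finset.Icc N₁ N₂,
          z n * Complex.exp (2 * Real.pi * Complex.I * (((n : ℤ) - (m : ℤ) : ℤ) : ℂ) * t) := by
        refine Finset.sum_congr rfl fun n _ => ?_
        rw [intervalIntegral.integral_finset_sum
          (fun m _ => ((hcont n m).intervalIntegrable _ _))]
        exact Finset.sum_congr rfl fun m _ => (intervalIntegral.integral_const_mul _ _).symm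
    _ = ∫ t in (-(1:ℝ)/2)..(1/2), ∑ n ∈ Finset.Icc 1 N, ∑ m ∈ Finset.Icc N₁ N₂,
          z n * Complex.exp (2 * Real.pi * Complex.I * (((n : ℤ) - (m : ℤ) : ℤ) : ℂ) * t) := by
        refine (intervalIntegral.integral_finset_sum (μ := MeasureTheory.volume)
          (a := (-(1:ℝ)/2)) (b := (1/2)) (s := Finset.Icc 1 N)
          (f := fun n t => ∑ m ∈ Finset.Icc N₁ N₂,
            z n * Complex.exp (2 * Real.pi * Complex.I * (((n : ℤ) - (m : ℤ) : ℤ) : ℂ) * t))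
          fun n _ => ?_).symm
        exact (continuous_finset_sum _ fun m _ => hcont n m).intervalIntegrable _ _
    _ = _ := by
        refine (intervalIntegral.integral_congr fun t _ => ?_).symm
        exact expand t

private lemma ae_ne_zero : ∀ᵐ t ∂(MeasureTheory.volume : MeasureTheory.Measure ℝ), t ≠ 0 := by
  have h0 : (MeasureTheory.volume : MeasureTheory.Measure ℝ) {0} = 0 :=
    MeasureTheory.measure_singleton 0
  filter_upwards [MeasureTheory.measure_eq_zero_iff_ae_notMem.mp h0] with t ht
  simpa using ht

private lemma step_B (N : ℕ) (hN : 1 ≤ N) (z : ℕ → ℂ) (N₁ N₂ : ℕ)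
    (h1 : 1 ≤ N₁) (h12 : N₁ ≤ N₂) (h2 : N₂ ≤ N) :
    ‖∑ n ∈ Finset.Icc N₁ N₂, z n‖ ≤
      ∫ t in (-(1:ℝ)/2)..(1/2),
        Lk N t * ‖∑ n ∈ Finset.Icc 1 N, z n * Complex.exp (2 * Real.pi * Complex.I * (n * t))‖ := by
  have hab : (-(1:ℝ)/2) ≤ 1/2 := by norm_num
  set S : ℝ → ℂ := fun t => ∑ n ∈ Finset.Icc 1 N, z n * Complex.exp (2 * Real.pi * Complex.I * (n * t)) with hS
  set D : ℝ → ℂ := fun t => ∑ m ∈ Finset.Icc N₁ N₂, Complex.exp (-(2 * Real.pi * Complex.I * (m * t))) with hD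
  have hScont : Continuous S := by
    apply continuous_finset_sum
    intro n _
    exact continuous_const.mul (Complex.continuous_exp.comp (by fun_prop))
  have hDcont : Continuous D := by
    apply continuous_finset_sum
    intro m _
    exact Complex.continuous_exp.comp (by fun_prop)
  rw [key_identity N z N₁ N₂ h1 h12 h2]
  calc ‖∫ t in (-(1:ℝ)/2)..(1/2), S t * D t‖
      ≤ ∫ t in (-(1:ℝ)/2)..(1/2), ‖S t * D t‖ :=
        intervalIntegral.norm_integral_le_integral_norm hab
    _ ≤ ∫ t in (-(1:ℝ)/2)..(1/2), Lk N t * ‖S t‖ := by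
        rw [intervalIntegral.integral_of_le hab, intervalIntegral.integral_of_le hab]
        apply MeasureTheory.integral_mono_ae
        · exact (hScont.mul hDcont).norm.integrableOn_Ioc
        · exact mul_Lk_integrableOn N hScont.norm
        · filter_upwards [MeasureTheory.ae_restrict_mem measurableSet_Ioc,
            MeasureTheory.ae_restrict_of_ae ae_ne_zero] with t htm ht0
          rw [norm_mul, mul_comm (Lk N t)]
          exact mul_le_mul_of_nonneg_left (kernel_bound N N₁ N₂ h1 h2 htm ht0) (norm_nonneg _)

end AuxMaximal

theorem maximal_partial_sum_integral (N : ℕ) (hN : 1 ≤ N) (z : ℕ → ℂ)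
    (k : ℝ) (hk : 1 ≤ k) (N₁ N₂ : ℕ) (h1 : 1 ≤ N₁) (h12 : N₁ ≤ N₂) (h2 : N₂ ≤ N) :
    ‖∑ n ∈ Finset.Icc N₁ N₂, z n‖ ^ k ≤
      (1 + Real.log N) ^ (k - 1) *
        ∫ t in (-(1:ℝ)/2)..(1/2),
          ‖∑ n ∈ Finset.Icc 1 N, z n * Complex.exp (2 * Real.pi * Complex.I * (n * t))‖ ^ k *
            min (N : ℝ) (1 / (2 * |t|)) := by
  have hab : (-(1:ℝ)/2) ≤ 1/2 := by norm_num
  set S : ℝ → ℂ := fun t => ∑ n ∈ Finset.Icc 1 N, z n * Complex.exp (2 * Real.pi * Complex.I * (n * t)) with hS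
  have hScont : Continuous S := by
    apply continuous_finset_sum
    intro n _
    exact continuous_const.mul (Complex.continuous_exp.comp (by fun_prop))
  have hSnc : Continuous fun t => ‖S t‖ := hScont.norm
  have hk0 : (0:ℝ) < k := by linarith
  have hSkc : Continuous fun t => ‖S t‖ ^ k :=
    hSnc.rpow_const fun t => Or.inr hk0.le
  set W : ℝ := 1 + Real.log N with hW
  have hN1 : (1:ℝ) ≤ N := by exact_mod_cast hN
  have hWpos : (0:ℝ) < W := by
    have := Real.log_nonneg hN1
    rw [hW]; linarith
  set μ : MeasureTheory.Measure ℝ :=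
    (MeasureTheory.volume.restrict (Set.Ioc (-(1:ℝ)/2) (1/2))).withDensity
      (fun t => ((Lk N t).toNNReal : ENNReal)) with hμ
  have hmeas : Measurable fun t => (Lk N t).toNNReal := (Lk_measurable N).real_toNNReal
  have hLint : MeasureTheory.IntegrableOn (Lk N) (Set.Ioc (-(1:ℝ)/2) (1/2)) :=
    (intervalIntegrable_iff_integrableOn_Ioc_of_le hab).mp (Lk_intervalIntegrable N _ _)
  have hmass : μ Set.univ = ENNReal.ofReal W := by
    rw [hμ, MeasureTheory.withDensity_apply _ MeasurableSet.univ,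
      MeasureTheory.Measure.restrict_univ]
    have h' : ∀ t : ℝ, ((Lk N t).toNNReal : ENNReal) = ENNReal.ofReal (Lk N t) := fun t => rfl
    simp_rw [h']
    rw [← MeasureTheory.ofReal_integral_eq_lintegral_ofReal hLint
      (Filter.Eventually.of_forall fun t => Lk_nonneg N t)]
    congr 1
    rw [← intervalIntegral.integral_of_le hab]
    exact Lk_integral N hN
  haveI : MeasureTheory.IsFiniteMeasure μ :=
    ⟨by rw [hmass]; exact ENNReal.ofReal_lt_top⟩
  haveI : NeZero μ := by
    refine ⟨fun h => ?_⟩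
    rw [h, MeasureTheory.Measure.coe_zero, Pi.zero_apply] at hmass
    exact absurd hmass.symm (ne_of_gt (ENNReal.ofReal_pos.mpr hWpos))
  have hfi : MeasureTheory.Integrable (fun t => ‖S t‖) μ := by
    rw [hμ, MeasureTheory.integrable_withDensity_iff_integrable_smul hmeas]
    apply (mul_Lk_integrableOn N hSnc).congr
    refine Filter.Eventually.of_forall fun t => ?_
    show Lk N t * ‖S t‖ = (Lk N t).toNNReal • ‖S t‖
    simp [NNReal.smul_def, Real.coe_toNNReal _ (Lk_nonneg N t)]
  have hgi : MeasureTheory.Integrable (fun t => ‖S t‖ ^ k) μ := by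
    rw [hμ, MeasureTheory.integrable_withDensity_iff_integrable_smul hmeas]
    apply (mul_Lk_integrableOn N hSkc).congr
    refine Filter.Eventually.of_forall fun t => ?_
    show Lk N t * ‖S t‖ ^ k = (Lk N t).toNNReal • ‖S t‖ ^ k
    simp [NNReal.smul_def, Real.coe_toNNReal _ (Lk_nonneg N t)]
  have jensen := (convexOn_rpow hk).map_average_le
    (by
      apply Continuous.continuousOn
      exact continuous_iff_continuousAt.mpr fun x =>
        Real.continuousAt_rpow_const x k (Or.inr hk0.le))
    isClosed_Ici
    (Filter.Eventually.of_forall fun x => Set.mem_Ici.mpr (norm_nonneg (S x)))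
    hfi hgi
  rw [MeasureTheory.average_eq, MeasureTheory.average_eq, MeasureTheory.measureReal_def, hmass,
    ENNReal.toReal_ofReal hWpos.le, smul_eq_mul, smul_eq_mul] at jensen
  have hA : (∫ x, ‖S x‖ ∂μ) = ∫ t in (-(1:ℝ)/2)..(1/2), Lk N t * ‖S t‖ := by
    rw [hμ, integral_withDensity_eq_integral_smul hmeas,
      intervalIntegral.integral_of_le hab]
    refine MeasureTheory.integral_congr_ae (Filter.Eventually.of_forall fun t => ?_)
    show (Lk N t).toNNReal • ‖S t‖ = Lk N t * ‖S t‖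
    simp [NNReal.smul_def, Real.coe_toNNReal _ (Lk_nonneg N t)]
  have hB : (∫ x, ‖S x‖ ^ k ∂μ) = ∫ t in (-(1:ℝ)/2)..(1/2), ‖S t‖ ^ k * Lk N t := by
    rw [hμ, integral_withDensity_eq_integral_smul hmeas,
      intervalIntegral.integral_of_le hab]
    refine MeasureTheory.integral_congr_ae (Filter.Eventually.of_forall fun t => ?_)
    show (Lk N t).toNNReal • ‖S t‖ ^ k = ‖S t‖ ^ k * Lk N t
    simp [NNReal.smul_def, Real.coe_toNNReal _ (Lk_nonneg N t), mul_comm]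
  rw [hA, hB] at jensen
  set I1 : ℝ := ∫ t in (-(1:ℝ)/2)..(1/2), Lk N t * ‖S t‖ with hI1
  set I2 : ℝ := ∫ t in (-(1:ℝ)/2)..(1/2), ‖S t‖ ^ k * Lk N t with hI2
  have hI1nn : 0 ≤ I1 := by
    rw [hI1]
    apply intervalIntegral.integral_nonneg hab
    exact fun t _ => mul_nonneg (Lk_nonneg N t) (norm_nonneg _)
  have hstepB := step_B N hN z N₁ N₂ h1 h12 h2
  calc ‖∑ n ∈ Finset.Icc N₁ N₂, z n‖ ^ k
      ≤ I1 ^ k := Real.rpow_le_rpow (norm_nonneg _) hstepB hk0.le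
    _ = (W * (W⁻¹ * I1)) ^ k := by rw [← mul_assoc, mul_inv_cancel₀ hWpos.ne', one_mul]
    _ = W ^ k * (W⁻¹ * I1) ^ k :=
        Real.mul_rpow hWpos.le (mul_nonneg (inv_nonneg.mpr hWpos.le) hI1nn)
    _ ≤ W ^ k * (W⁻¹ * I2) :=
        mul_le_mul_of_nonneg_left jensen (Real.rpow_nonneg hWpos.le k)
    _ = (W ^ k * W⁻¹) * I2 := by ring
    _ = W ^ (k - 1) * I2 := by
        rw [← Real.rpow_neg_one W, ← Real.rpow_add hWpos,
          show k + -1 = k - 1 by ring]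
end

section
/- Let f be continuously differentiable on an interval I of real numbers with f′ monotonic, and suppose ‖f′(x)‖ ≥ λ > 0 for all x ∈ I, where ‖t‖ denotes the distance from t to the nearest integer. Then |∑_{n ∈ I} e(f(n))| ≪ 1/λ, with an absolute implied constant. -/
open Real

private lemma tel_mono (v : ℕ → ℝ) (n : ℕ) (h : ∀ i, i < n → v i ≤ v (i+1)) :
    ∑ i ∈ Finset.range n, |v (i+1) - v i| = v n - v 0 := by
  rw [← Finset.sum_range_sub v n]
  exact Finset.sum_congr rfl fun i hi => abs_of_nonneg (by
    have := h i (Finset.mem_range.mp hi); linarith)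

private lemma tel_abs (v : ℕ → ℝ) (n : ℕ)
    (h : (∀ i, i < n → v i ≤ v (i+1)) ∨ (∀ i, i < n → v (i+1) ≤ v i)) :
    ∑ i ∈ Finset.range n, |v (i+1) - v i| ≤ |v n| + |v 0| := by
  rcases h with h | h
  · rw [tel_mono v n h]
    have := abs_nonneg (v 0); have := le_abs_self (v n); have := neg_abs_le (v 0); linarith
  · have : ∑ i ∈ Finset.range n, |v (i+1) - v i| = v 0 - v n := by
      rw [← Finset.sum_range_sub' v n]
      exact Finset.sum_congr rfl fun i hi => by
        rw [abs_sub_comm]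
        exact abs_of_nonneg (by have := h i (Finset.mem_range.mp hi); linarith)
    rw [this]
    have := le_abs_self (v 0); have := neg_abs_le (v n); linarith

private lemma cot_anti {x y : ℝ} (hx : 0 < x) (hxy : x ≤ y) (hy : y < π) :
    Real.cos y / Real.sin y ≤ Real.cos x / Real.sin x := by
  have sx : 0 < Real.sin x := Real.sin_pos_of_pos_of_lt_pi hx (lt_of_le_of_lt hxy hy)
  have sy : 0 < Real.sin y := Real.sin_pos_of_pos_of_lt_pi (lt_of_lt_of_le hx hxy) hy
  rw [div_le_div_iff₀ sy sx]
  have h0 : 0 ≤ Real.sin (y - x) :=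
    Real.sin_nonneg_of_nonneg_of_le_pi (by linarith) (by linarith)
  rw [Real.sin_sub] at h0
  nlinarith

private lemma sin_lb {lam x : ℝ} (hl : 0 < lam) (hl2 : lam ≤ 1/2)
    (h1 : π * lam ≤ x) (h2 : x ≤ π * (1 - lam)) : 2 * lam ≤ Real.sin x := by
  have hπ := Real.pi_pos
  have key : ∀ z : ℝ, π * lam ≤ z → z ≤ π / 2 → 2 * lam ≤ Real.sin z := by
    intro z h1 h2
    have : 2 / π * z ≤ Real.sin z := Real.mul_le_sin (by nlinarith) h2
    have : 2 / π * (π * lam) ≤ 2 / π * z := by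
      apply mul_le_mul_of_nonneg_left h1; positivity
    have heq : 2 / π * (π * lam) = 2 * lam := by field_simp
    nlinarith [Real.mul_le_sin (show (0:ℝ) ≤ z by nlinarith) h2]
  rcases le_or_gt x (π / 2) with h | h
  · exact key x h1 h
  · have : 2 * lam ≤ Real.sin (π - x) := key (π - x) (by nlinarith) (by linarith)
    rwa [Real.sin_pi_sub] at this

private lemma inv_exp_sub_one {u : ℝ} (hs : Real.sin (u/2) ≠ 0) :
    (Complex.exp (u * Complex.I) - 1)⁻¹
      = -1/2 - (Real.cos (u/2) / Real.sin (u/2)) / 2 * Complex.I := by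
  have h2 : Complex.exp ((u:ℂ) * Complex.I) = Complex.exp ((u/2 : ℝ) * Complex.I) ^ 2 := by
    rw [← Complex.exp_nat_mul]; push_cast; ring_nf
  have hE : Complex.exp ((u/2 : ℝ) * Complex.I)
      = (Real.cos (u/2) : ℂ) + (Real.sin (u/2) : ℂ) * Complex.I := by
    rw [Complex.exp_mul_I]
    push_cast [Complex.ofReal_cos, Complex.ofReal_sin]
    norm_num
  set cc : ℂ := (Real.cos (u/2) : ℂ) with hcc
  set ss : ℂ := (Real.sin (u/2) : ℂ) with hss
  have hsc : ss ≠ 0 := Complex.ofReal_ne_zero.mpr hs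
  have pyth : ss^2 + cc^2 = 1 := by
    rw [hcc, hss]
    exact_mod_cast congrArg (Complex.ofReal) (Real.sin_sq_add_cos_sq (u/2))
  apply inv_eq_of_mul_eq_one_right
  have hA : Complex.exp ((u:ℂ) * Complex.I) - 1 = 2*ss*Complex.I*(cc + ss*Complex.I) := by
    rw [h2, hE]
    linear_combination (-ss^2) * Complex.I_sq + pyth
  have hB : (-1/2 - (cc/ss)/2 * Complex.I : ℂ) = -(ss + cc*Complex.I)/(2*ss) := by
    field_simp; ring
  rw [hA, hB]
  field_simp
  ring_nf
  linear_combination (Complex.I*(-cc*ss) + (-cc^2 - ss^2)) * Complex.I_sq + pyth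

private lemma sum_Icc_int (N M : ℤ) (h : N ≤ M) (F : ℤ → ℂ) :
    ∑ n ∈ Finset.Icc N M, F n = ∑ k ∈ Finset.range ((M - N).toNat + 1), F (N + k) := by
  apply Finset.sum_nbij' (fun n => (n - N).toNat) (fun k => N + (k:ℤ)) <;>
    intros <;> simp_all [Finset.mem_Icc, Finset.mem_range] <;> omega

private lemma round_min (t : ℝ) (z : ℤ) : |t - round t| ≤ |t - z| := by
  rw [abs_sub_round_eq_min]
  have hf : Int.fract t = t - ⌊t⌋ := (Int.self_sub_floor t).symm
  rcases le_or_gt (z : ℝ) (⌊t⌋ : ℝ) with h | h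
  · have h1 : t - (z:ℝ) ≤ |t - z| := le_abs_self _
    have h2 := Int.floor_le t
    calc min (Int.fract t) (1 - Int.fract t) ≤ Int.fract t := min_le_left _ _
    _ ≤ |t - z| := by rw [hf]; linarith
  · have hz : (⌊t⌋ : ℝ) + 1 ≤ (z:ℝ) := by exact_mod_cast (by exact_mod_cast h : ⌊t⌋ < z)
    have h1 : -(t - (z:ℝ)) ≤ |t - z| := neg_le_abs _
    calc min (Int.fract t) (1 - Int.fract t) ≤ 1 - Int.fract t := min_le_right _ _
    _ ≤ |t - z| := by rw [hf]; linarith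


private lemma range_claim (a b : ℝ) (hab : a ≤ b) (f' : ℝ → ℝ) (lam : ℝ) (hl : 0 < lam)
    (hcont : ContinuousOn f' (Set.Icc a b))
    (hmono : MonotoneOn f' (Set.Icc a b) ∨ AntitoneOn f' (Set.Icc a b))
    (hsep : ∀ x ∈ Set.Icc a b, lam ≤ |f' x - round (f' x)|) :
    ∀ x ∈ Set.Icc a b, (⌊f' a⌋ : ℝ) + lam ≤ f' x ∧ f' x ≤ (⌊f' a⌋ : ℝ) + 1 - lam := by
  set m := ⌊f' a⌋ with hm'
  have hamem : a ∈ Set.Icc a b := ⟨le_refl a, hab⟩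
  have hfr : lam ≤ Int.fract (f' a) ∧ lam ≤ 1 - Int.fract (f' a) := by
    have := hsep a hamem
    rwa [abs_sub_round_eq_min, le_min_iff] at this
  have hfid : Int.fract (f' a) = f' a - (m:ℝ) := (Int.self_sub_floor (f' a)).symm
  have ha1 : (m:ℝ) + lam ≤ f' a := by rw [hfid] at hfr; linarith [hfr.1]
  have ha2 : f' a ≤ (m:ℝ) + 1 - lam := by rw [hfid] at hfr; linarith [hfr.2]
  have hniv : ∀ y ∈ Set.Icc a b, ∀ z : ℤ, f' y ≠ (z:ℝ) := by
    intro y hy z h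
    have h1 := hsep y hy
    rw [h, round_intCast, sub_self, abs_zero] at h1
    linarith
  have hclose : ∀ y ∈ Set.Icc a b, ∀ z : ℤ, |f' y - (z:ℝ)| < lam → False := by
    intro y hy z h
    have h1 := hsep y hy
    have h2 := round_min (f' y) z
    linarith
  intro x hx
  rcases hmono with hm | hm
  · have hlow : (m:ℝ) + lam ≤ f' x := le_trans ha1 (hm hamem hx hx.1)
    refine ⟨hlow, ?_⟩
    by_contra hcon
    push_neg at hcon
    rcases le_or_gt (f' x) ((m:ℝ)+1) with h | h
    · apply hclose x hx (m+1)
      push_cast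
      rw [abs_of_nonpos (by linarith)]
      linarith
    · have hsub : Set.Icc a x ⊆ Set.Icc a b := Set.Icc_subset_Icc (le_refl a) hx.2
      have hmem : ((m:ℝ)+1) ∈ Set.Icc (f' a) (f' x) := ⟨by linarith, by linarith⟩
      obtain ⟨y, hy, hyv⟩ := intermediate_value_Icc hx.1 (hcont.mono hsub) hmem
      exact hniv y (hsub hy) (m+1) (by push_cast; rw [hyv])
  · have hhigh : f' x ≤ (m:ℝ) + 1 - lam := le_trans (hm hamem hx hx.1) ha2
    refine ⟨?_, hhigh⟩
    by_contra hcon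
    push_neg at hcon
    rcases le_or_gt ((m:ℝ)) (f' x) with h | h
    · apply hclose x hx m
      rw [abs_of_nonneg (by linarith)]
      linarith
    · have hsub : Set.Icc a x ⊆ Set.Icc a b := Set.Icc_subset_Icc (le_refl a) hx.2
      have hmem : ((m:ℝ)) ∈ Set.Icc (f' x) (f' a) := ⟨by linarith, by linarith⟩
      obtain ⟨y, hy, hyv⟩ := intermediate_value_Icc' hx.1 (hcont.mono hsub) hmem
      exact hniv y (hsub hy) m (by rw [hyv])

private lemma KL_core (a b : ℝ) (hab : a ≤ b) (g g' : ℝ → ℝ) (lam : ℝ) (hl : 0 < lam)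
    (hl2 : lam ≤ 1/2)
    (hd : ∀ x ∈ Set.Icc a b, HasDerivAt g (g' x) x)
    (hmono : MonotoneOn g' (Set.Icc a b) ∨ AntitoneOn g' (Set.Icc a b))
    (hlo : ∀ x ∈ Set.Icc a b, lam ≤ g' x) (hhi : ∀ x ∈ Set.Icc a b, g' x ≤ 1 - lam) :
    ‖∑ n ∈ Finset.Icc ⌈a⌉ ⌊b⌋, Complex.exp (2 * Real.pi * Complex.I * (g n))‖ ≤ 4 / lam := by
  have hπ := Real.pi_pos
  have hlam4 : (2:ℝ) ≤ 1/lam := by rw [le_div_iff₀ hl]; linarith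
  have h4pos : (0:ℝ) < 4/lam := by positivity
  by_cases hNM : ⌈a⌉ ≤ ⌊b⌋
  swap
  · rw [Finset.Icc_eq_empty (by omega), Finset.sum_empty, norm_zero]; linarith
  set N := ⌈a⌉ with hN
  set M := ⌊b⌋ with hM
  set K : ℕ := (M - N).toNat with hK
  set x : ℕ → ℝ := fun k => ((N + k : ℤ) : ℝ) with hx
  set E : ℕ → ℂ := fun k => Complex.exp (2 * (π:ℂ) * Complex.I * (g (x k))) with hE
  have hsum : ∑ n ∈ Finset.Icc N M, Complex.exp (2 * (π:ℂ) * Complex.I * (g n))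
      = ∑ k ∈ Finset.range (K + 1), E k := sum_Icc_int N M hNM _
  rw [hsum]
  have hEnorm : ∀ k, ‖E k‖ = 1 := by
    intro k
    have : (2 * (π:ℂ) * Complex.I * (g (x k))) = ((2 * π * g (x k) : ℝ) : ℂ) * Complex.I := by
      push_cast; ring
    rw [hE]; simp only [this]
    exact Complex.norm_exp_ofReal_mul_I _
  have hxmem : ∀ k : ℕ, k ≤ K → x k ∈ Set.Icc a b := by
    intro k hk
    constructor
    · have h1 : a ≤ ((N:ℤ):ℝ) := Int.le_ceil a
      have h2 : ((N:ℤ):ℝ) ≤ ((N + k : ℤ):ℝ) := by exact_mod_cast (by omega : (N:ℤ) ≤ N + k)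
      rw [hx]; dsimp only; linarith
    · have h1 : ((N + k : ℤ) : ℝ) ≤ ((M:ℤ):ℝ) := by
        have : (N + k : ℤ) ≤ M := by omega
        exact_mod_cast this
      have := Int.floor_le b
      rw [hx]; dsimp only; linarith
  set d : ℕ → ℝ := fun k => g (x (k+1)) - g (x k) with hd'
  have hxsucc : ∀ k : ℕ, x (k+1) = x k + 1 := by
    intro k; rw [hx]; push_cast; ring
  have hxi : ∀ k : ℕ, k < K → ∃ ξ ∈ Set.Icc a b,
      ξ ∈ Set.Ioo (x k) (x (k+1)) ∧ g' ξ = d k := by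
    intro k hk
    have hk1 : k + 1 ≤ K := hk
    have hsub : Set.Icc (x k) (x (k+1)) ⊆ Set.Icc a b := by
      apply Set.Icc_subset_Icc (hxmem k (le_of_lt hk)).1 (hxmem (k+1) hk1).2
    have hlt : x k < x (k+1) := by rw [hxsucc]; linarith
    have hcont : ContinuousOn g (Set.Icc (x k) (x (k+1))) :=
      fun y hy => ((hd y (hsub hy)).continuousAt).continuousWithinAt
    have hder : ∀ y ∈ Set.Ioo (x k) (x (k+1)), HasDerivAt g (g' y) y :=
      fun y hy => hd y (hsub (Set.mem_Icc_of_Ioo hy))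
    obtain ⟨ξ, hξ, hval⟩ := exists_hasDerivAt_eq_slope g g' hlt hcont hder
    refine ⟨ξ, hsub (Set.mem_Icc_of_Ioo hξ), hξ, ?_⟩
    have h1 : x (k+1) - x k = 1 := by rw [hxsucc]; ring
    rw [hval, hd', h1, div_one]
  have hdlo : ∀ k : ℕ, k < K → lam ≤ d k := by
    intro k hk
    obtain ⟨ξ, hξm, _, hval⟩ := hxi k hk
    rw [← hval]; exact hlo ξ hξm
  have hdhi : ∀ k : ℕ, k < K → d k ≤ 1 - lam := by
    intro k hk
    obtain ⟨ξ, hξm, _, hval⟩ := hxi k hk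
    rw [← hval]; exact hhi ξ hξm
  have hdadj : (∀ k : ℕ, k + 1 < K → d k ≤ d (k+1)) ∨ (∀ k : ℕ, k + 1 < K → d (k+1) ≤ d k) := by
    rcases hmono with hm | hm
    · left; intro k hk
      obtain ⟨ξ, hξm, hξo, hval⟩ := hxi k (by omega)
      obtain ⟨η, hηm, hηo, hval'⟩ := hxi (k+1) hk
      rw [← hval, ← hval']
      exact hm hξm hηm (le_trans (le_of_lt hξo.2) (le_of_lt hηo.1))
    · right; intro k hk
      obtain ⟨ξ, hξm, hξo, hval⟩ := hxi k (by omega)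
      obtain ⟨η, hηm, hηo, hval'⟩ := hxi (k+1) hk
      rw [← hval, ← hval']
      exact hm hξm hηm (le_trans (le_of_lt hξo.2) (le_of_lt hηo.1))
  set u : ℕ → ℝ := fun k => 2 * π * d k with hu
  set w : ℕ → ℝ := fun k => Real.cos (u k / 2) / Real.sin (u k / 2) with hw
  set c : ℕ → ℂ := fun k => (Complex.exp ((u k : ℂ) * Complex.I) - 1)⁻¹ with hc'
  have huhalf : ∀ k : ℕ, u k / 2 = π * d k := by intro k; rw [hu]; ring
  have hsin : ∀ k : ℕ, k < K → 2 * lam ≤ Real.sin (u k / 2) := by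
    intro k hk
    rw [huhalf]
    apply sin_lb hl hl2
    · exact mul_le_mul_of_nonneg_left (hdlo k hk) (le_of_lt hπ)
    · exact mul_le_mul_of_nonneg_left (hdhi k hk) (le_of_lt hπ)
  have hsinpos : ∀ k : ℕ, k < K → 0 < Real.sin (u k / 2) := by
    intro k hk; linarith [hsin k hk]
  have hcw : ∀ k : ℕ, k < K → c k = -1/2 - (w k) / 2 * Complex.I := by
    intro k hk
    rw [hc', hw]; dsimp only
    rw [inv_exp_sub_one (ne_of_gt (hsinpos k hk))]
    push_cast
    ring
  have hwb : ∀ k : ℕ, k < K → |w k| ≤ 1 / (2 * lam) := by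
    intro k hk
    rw [hw]; dsimp only
    rw [abs_div, abs_of_pos (hsinpos k hk)]
    apply div_le_div₀ (by positivity) (Real.abs_cos_le_one _) (by positivity) (hsin k hk)
  have hcb : ∀ k : ℕ, k < K → ‖c k‖ ≤ 1/2 + 1/(4 * lam) := by
    intro k hk
    rw [hcw k hk]
    have : ‖(-1/2 - (w k)/2 * Complex.I : ℂ)‖ ≤ ‖(-1/2 : ℂ)‖ + ‖((w k)/2 : ℝ) * Complex.I‖ := by
      push_cast
      exact norm_sub_le _ _
    apply le_trans this
    rw [norm_mul, Complex.norm_I, mul_one, Complex.norm_real, Real.norm_eq_abs, abs_div]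
    have : ‖(-1/2 : ℂ)‖ = 1/2 := by norm_num
    rw [this]
    have : |w k| / |(2:ℝ)| ≤ (1/(2*lam))/2 := by
      rw [abs_two]
      linarith [hwb k hk]
    have h2 : (1/(2*lam))/2 = 1/(4*lam) := by ring
    linarith [h2 ▸ this]
  have hcd : ∀ k j : ℕ, k < K → j < K → ‖c k - c j‖ = |w k - w j| / 2 := by
    intro k j hk hj
    have : c k - c j = (((w j - w k)/2 : ℝ) : ℂ) * Complex.I := by
      rw [hcw k hk, hcw j hj]; push_cast; ring
    rw [this, norm_mul, Complex.norm_I, mul_one, Complex.norm_real, Real.norm_eq_abs,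
      abs_div, abs_two, abs_sub_comm]
  have hmul : ∀ k : ℕ, k < K → E k = (E (k+1) - E k) * c k := by
    intro k hk
    have hexp : E (k+1) = E k * Complex.exp ((u k : ℂ) * Complex.I) := by
      rw [hE]; dsimp only
      rw [← Complex.exp_add]
      congr 1
      rw [hu, hd']; push_cast; ring
    have hne : Complex.exp ((u k : ℂ) * Complex.I) - 1 ≠ 0 := by
      intro h0
      have := hcw k hk
      rw [hc'] at this; dsimp only at this
      rw [h0, inv_zero] at this
      have hre := congrArg Complex.re this
      simp [Complex.div_re] at hre
      norm_num at hre
    rw [hexp, hc']; dsimp only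
    rw [show E k * Complex.exp ((u k : ℂ) * Complex.I) - E k
        = E k * (Complex.exp ((u k : ℂ) * Complex.I) - 1) by ring]
    rw [mul_assoc, mul_inv_cancel₀ hne, mul_one]
  by_cases hK0 : K = 0
  · rw [hK0, Finset.sum_range_one, hEnorm 0]
    have e3 : 4/lam = 4*(1/lam) := by ring
    linarith
  have hK1 : 1 ≤ K := Nat.one_le_iff_ne_zero.mpr hK0
  have hKm : K - 1 < K := by omega
  have habel := Finset.sum_range_by_parts (fun k => c k) (fun k => E (k+1) - E k) K
  simp only [smul_eq_mul, Finset.sum_range_sub] at habel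
  have hsum2 : (∑ k ∈ Finset.range K, E k) = ∑ k ∈ Finset.range K, c k * (E (k+1) - E k) :=
    Finset.sum_congr rfl fun k hk =>
      (hmul k (Finset.mem_range.mp hk)).trans (mul_comm _ _)
  have key : ∑ k ∈ Finset.range (K+1), E k
      = (c (K-1) * (E K - E 0)
          - ∑ i ∈ Finset.range (K-1), (c (i+1) - c i) * (E (i+1) - E 0)) + E K := by
    rw [Finset.sum_range_succ, hsum2, habel]
  rw [key]
  have hw_tel : ∑ i ∈ Finset.range (K-1), |w (i+1) - w i| ≤ |w (K-1)| + |w 0| := by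
    apply tel_abs
    have hfacts : ∀ i : ℕ, i + 1 < K →
        0 < u i / 2 ∧ u (i+1) / 2 < π ∧ 0 < u (i+1) / 2 ∧ u i / 2 < π := by
      intro i hi
      have h1 := hdlo i (by omega)
      have h2 := hdhi (i+1) hi
      have h3 := hdlo (i+1) hi
      have h4 := hdhi i (by omega)
      rw [huhalf, huhalf]
      refine ⟨by nlinarith, by nlinarith, by nlinarith, by nlinarith⟩
    rcases hdadj with h | h
    · right; intro i hi
      have hi1 : i + 1 < K := by omega
      obtain ⟨f1, f2, f3, f4⟩ := hfacts i hi1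
      have hxy : u i / 2 ≤ u (i+1) / 2 := by
        rw [huhalf, huhalf]
        exact mul_le_mul_of_nonneg_left (h i hi1) (le_of_lt hπ)
      exact cot_anti f1 hxy f2
    · left; intro i hi
      have hi1 : i + 1 < K := by omega
      obtain ⟨f1, f2, f3, f4⟩ := hfacts i hi1
      have hxy : u (i+1) / 2 ≤ u i / 2 := by
        rw [huhalf, huhalf]
        exact mul_le_mul_of_nonneg_left (h i hi1) (le_of_lt hπ)
      exact cot_anti f3 hxy f4
  have hEd : ∀ j : ℕ, ‖E j - E 0‖ ≤ 2 := by
    intro j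
    calc ‖E j - E 0‖ ≤ ‖E j‖ + ‖E 0‖ := norm_sub_le _ _
    _ = 2 := by rw [hEnorm, hEnorm]; norm_num
  have hT2 : ‖∑ i ∈ Finset.range (K-1), (c (i+1) - c i) * (E (i+1) - E 0)‖
      ≤ |w (K-1)| + |w 0| := by
    calc ‖∑ i ∈ Finset.range (K-1), (c (i+1) - c i) * (E (i+1) - E 0)‖
        ≤ ∑ i ∈ Finset.range (K-1), ‖(c (i+1) - c i) * (E (i+1) - E 0)‖ := norm_sum_le _ _
      _ ≤ ∑ i ∈ Finset.range (K-1), |w (i+1) - w i| := by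
          apply Finset.sum_le_sum
          intro i hi
          have hi' := Finset.mem_range.mp hi
          have hi1 : i + 1 < K := by omega
          have hi0 : i < K := by omega
          rw [norm_mul, hcd (i+1) i hi1 hi0]
          have h2 := hEd (i+1)
          have h3 := abs_nonneg (w (i+1) - w i)
          nlinarith [norm_nonneg (E (i+1) - E 0)]
      _ ≤ _ := hw_tel
  have hT1 : ‖c (K-1) * (E K - E 0)‖ ≤ (1/2 + 1/(4*lam)) * 2 := by
    rw [norm_mul]
    have h1 := hcb (K-1) hKm
    have h2 := hEd K
    nlinarith [norm_nonneg (E K - E 0), norm_nonneg (c (K-1))]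
  have htot : ‖(c (K-1) * (E K - E 0)
      - ∑ i ∈ Finset.range (K-1), (c (i+1) - c i) * (E (i+1) - E 0)) + E K‖
      ≤ ‖c (K-1) * (E K - E 0)‖
        + ‖∑ i ∈ Finset.range (K-1), (c (i+1) - c i) * (E (i+1) - E 0)‖ + ‖E K‖ := by
    have h1 := norm_add_le (c (K-1) * (E K - E 0)
      - ∑ i ∈ Finset.range (K-1), (c (i+1) - c i) * (E (i+1) - E 0)) (E K)
    have h2 := norm_sub_le (c (K-1) * (E K - E 0))
      (∑ i ∈ Finset.range (K-1), (c (i+1) - c i) * (E (i+1) - E 0))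
    linarith
  have hwK := hwb (K-1) hKm
  have hw0 := hwb 0 (by omega)
  have e1 : 1/(2*lam) = (1/lam)/2 := by ring
  have e2 : 1/(4*lam) = (1/lam)/4 := by ring
  have e3 : 4/lam = 4*(1/lam) := by ring
  rw [hEnorm K] at htot
  linarith

theorem kusmin_landau :
    ∃ C > 0, ∀ (a b : ℝ), a ≤ b → ∀ (f f' : ℝ → ℝ) (lam : ℝ), 0 < lam →
      (∀ x ∈ Set.Icc a b, HasDerivAt f (f' x) x) →
      ContinuousOn f' (Set.Icc a b) →
      (MonotoneOn f' (Set.Icc a b) ∨ AntitoneOn f' (Set.Icc a b)) →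
      (∀ x ∈ Set.Icc a b, lam ≤ |f' x - round (f' x)|) →
      ‖∑ n ∈ Finset.Icc ⌈a⌉ ⌊b⌋,
          Complex.exp (2 * Real.pi * Complex.I * (f n))‖ ≤ C / lam := by
  refine ⟨4, by norm_num, ?_⟩
  intro a b hab f f' lam hl hder hcont hmono hsep
  have hamem : a ∈ Set.Icc a b := ⟨le_refl a, hab⟩
  have hl2 : lam ≤ 1/2 := le_trans (hsep a hamem) (abs_sub_round (f' a))
  set m := ⌊f' a⌋ with hm'
  have hclaim := range_claim a b hab f' lam hl hcont hmono hsep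
  set g : ℝ → ℝ := fun y => f y - (m:ℝ) * y with hg
  set g' : ℝ → ℝ := fun y => f' y - (m:ℝ) with hg'
  have hgd : ∀ x ∈ Set.Icc a b, HasDerivAt g (g' x) x := by
    intro x hx
    have h1 : HasDerivAt (fun y : ℝ => (m:ℝ) * y) ((m:ℝ) * 1) x :=
      (hasDerivAt_id x).const_mul (m:ℝ)
    have := (hder x hx).sub h1
    rw [mul_one] at this; exact this
  have hgmono : MonotoneOn g' (Set.Icc a b) ∨ AntitoneOn g' (Set.Icc a b) := by
    rcases hmono with h | h
    · left; intro p hp q hq hpq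
      have := h hp hq hpq; simp only [hg']; linarith
    · right; intro p hp q hq hpq
      have := h hp hq hpq; simp only [hg']; linarith
  have hglo : ∀ x ∈ Set.Icc a b, lam ≤ g' x := by
    intro x hx; have := (hclaim x hx).1; simp only [hg']; linarith
  have hghi : ∀ x ∈ Set.Icc a b, g' x ≤ 1 - lam := by
    intro x hx; have := (hclaim x hx).2; simp only [hg']; linarith
  have hKL := KL_core a b hab g g' lam hl hl2 hgd hgmono hglo hghi
  have hsum_eq : ∑ n ∈ Finset.Icc ⌈a⌉ ⌊b⌋, Complex.exp (2 * Real.pi * Complex.I * (f n))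
      = ∑ n ∈ Finset.Icc ⌈a⌉ ⌊b⌋, Complex.exp (2 * Real.pi * Complex.I * (g n)) := by
    apply Finset.sum_congr rfl
    intro n _
    have key : (2 * (Real.pi:ℂ) * Complex.I * (f (n:ℝ) : ℂ))
        = 2 * (Real.pi:ℂ) * Complex.I * (g (n:ℝ) : ℂ) + ((m * n : ℤ):ℂ) * (2 * Real.pi * Complex.I) := by
      simp only [hg]; push_cast; ring
    rw [key, Complex.exp_add, Complex.exp_int_mul_two_pi_mul_I, mul_one]
  rw [hsum_eq]
  exact hKL
end

section
/- Let f : [a,b] → ℝ be differentiable with f(x) ≪ P and |f′(x)| ≫ Δ and f′ of constant sign on [a,b], where b − a ≍ N. Then ∑_{N < n ≤ 2N} min{Q, 1/‖f(n)‖} ≪ (P + 1)(Q + 1/Δ) log(2 + 1/Δ), where ‖t‖ is the distance from t to the nearest integer. -/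
open Finset Real

set_option maxHeartbeats 2000000 in
theorem sum_min_inv_norm :
    ∃ C > 0, ∀ (N Q P Δ : ℝ), 1 ≤ N → 1 ≤ Q → 0 < P → 0 < Δ →
      ∀ f f' : ℝ → ℝ,
      (∀ x ∈ Set.Icc N (2 * N), HasDerivAt f (f' x) x) →
      (∀ x ∈ Set.Icc N (2 * N), |f x| ≤ P) →
      (∀ x ∈ Set.Icc N (2 * N), Δ ≤ |f' x|) →
      ((∀ x ∈ Set.Icc N (2 * N), 0 < f' x) ∨ (∀ x ∈ Set.Icc N (2 * N), f' x < 0)) →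
      (∑ n ∈ Finset.Ioc ⌊N⌋₊ ⌊2 * N⌋₊,
          (if |f n - round (f n)| = 0 then Q else min Q (1 / |f n - round (f n)|)))
        ≤ C * (P + 1) * (Q + 1 / Δ) * Real.log (2 + 1 / Δ) := by
  refine ⟨30, by norm_num, ?_⟩
  intro N Q P Δ hN hQ hP hΔ f f' hderiv hfP hf'Δ _hsign
  set T : Finset ℕ := Finset.Ioc ⌊N⌋₊ ⌊2 * N⌋₊ with hT
  have hQ0 : (0:ℝ) < Q := by linarith
  -- membership of integers in the real interval
  have hmem : ∀ n ∈ T, (n : ℝ) ∈ Set.Icc N (2 * N) := by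
    intro n hn
    rw [hT, Finset.mem_Ioc] at hn
    constructor
    · have h1 : N < (⌊N⌋₊ : ℝ) + 1 := Nat.lt_floor_add_one N
      have h2 : ((⌊N⌋₊ : ℝ) + 1) ≤ n := by exact_mod_cast hn.1
      linarith
    · calc (n:ℝ) ≤ ⌊2*N⌋₊ := by exact_mod_cast hn.2
        _ ≤ 2*N := Nat.floor_le (by linarith)
  -- gap lemma
  have key : ∀ a ∈ T, ∀ b ∈ T, a < b → Δ ≤ |f b - f a| := by
    intro a ha b hb hab
    have haR := hmem a ha; have hbR := hmem b hb
    have habR : (a:ℝ) < b := by exact_mod_cast hab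
    have hsub : Set.Icc (a:ℝ) b ⊆ Set.Icc N (2*N) := Set.Icc_subset_Icc haR.1 hbR.2
    have hcont : ContinuousOn f (Set.Icc (a:ℝ) b) := fun x hx =>
      ((hderiv x (hsub hx)).continuousAt).continuousWithinAt
    obtain ⟨c, hc, hceq⟩ := exists_hasDerivAt_eq_slope f f' habR hcont
      (fun x hx => hderiv x (hsub (Set.mem_Icc_of_Ioo hx)))
    have hcI : c ∈ Set.Icc N (2*N) := hsub (Set.mem_Icc_of_Ioo hc)
    have h1 : Δ ≤ |f' c| := hf'Δ c hcI
    have hba : (1:ℝ) ≤ (b:ℝ) - a := by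
      have : (a:ℝ) + 1 ≤ b := by exact_mod_cast hab
      linarith
    have h2 : |f' c| = |f ↑b - f ↑a| / ((b:ℝ) - a) := by
      rw [hceq, abs_div, abs_of_pos (by linarith : (0:ℝ) < (b:ℝ) - a)]
    have h3 : |f ↑b - f ↑a| / ((b:ℝ) - a) ≤ |f ↑b - f ↑a| :=
      div_le_self (abs_nonneg _) hba
    linarith [h1, h2 ▸ h1]
  have hgap : ∀ a ∈ T, ∀ b ∈ T, a ≠ b → Δ ≤ |f b - f a| := by
    intro a ha b hb hne
    rcases lt_or_gt_of_ne hne with h | h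
    · exact key a ha b hb h
    · rw [abs_sub_comm]; exact key b hb a ha h
  -- definitions
  set t : ℕ → ℝ := fun n => |f n - round (f n)| with ht
  set k : ℕ → ℕ := fun n => ⌊ t n / Δ ⌋₊ with hk
  set w : ℕ → ℝ := fun j => if j = 0 then Q else 1/((j:ℝ)*Δ) with hw
  have hwnonneg : ∀ j, 0 ≤ w j := by
    intro j; rw [hw]; dsimp only
    split
    · linarith
    · positivity
  have htnonneg : ∀ n, 0 ≤ t n := fun n => abs_nonneg _
  have hthalf : ∀ n, t n ≤ 1/2 := fun n => abs_sub_round _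
  -- term bound
  have hterm : ∀ n ∈ T, (if t n = 0 then Q else min Q (1 / t n)) ≤ w (k n) := by
    intro n _
    by_cases h0 : t n = 0
    · have : k n = 0 := by rw [hk]; simp [h0]
      rw [if_pos h0, this, hw]; simp
    · rw [if_neg h0]
      rcases Nat.eq_zero_or_pos (k n) with hk0 | hk1
      · rw [hk0, hw]; simpa using min_le_left Q (1 / t n)
      · have hkle : (k n : ℝ) ≤ t n / Δ := Nat.floor_le (div_nonneg (htnonneg n) hΔ.le)
        have hkt : (k n : ℝ) * Δ ≤ t n := by
          have := mul_le_mul_of_nonneg_right hkle hΔ.le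
          rwa [div_mul_cancel₀ _ (ne_of_gt hΔ)] at this
        have hk1' : (1:ℝ) ≤ (k n : ℝ) := by exact_mod_cast hk1
        have hpos : (0:ℝ) < (k n : ℝ) * Δ := by nlinarith
        have h4 : 1 / t n ≤ 1/((k n:ℝ)*Δ) := one_div_le_one_div_of_le hpos hkt
        have : w (k n) = 1/((k n:ℝ)*Δ) := by
          rw [hw]; simp [Nat.pos_iff_ne_zero.mp hk1]
        rw [this]
        exact le_trans (min_le_right _ _) h4
    -- injection
  set φ : ℕ → ℤ × Bool × ℕ := fun n => (round (f n), decide ((round (f n) : ℝ) ≤ f n), k n) with hφ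
  have hinj : Set.InjOn φ T := by
    intro a ha b hb heq
    by_contra hne
    have hΔab := hgap a ha b hb hne
    rw [hφ] at heq
    have h1 : round (f a) = round (f b) := congrArg Prod.fst heq
    have h2 : ((round (f a) : ℝ) ≤ f a) ↔ ((round (f b) : ℝ) ≤ f b) := by
      have := congrArg (fun p : ℤ × Bool × ℕ => p.2.1) heq
      simpa [decide_eq_decide] using this
    have h3 : k a = k b := congrArg (fun p : ℤ × Bool × ℕ => p.2.2) heq
    have habs : |t a - t b| = |f ↑a - f ↑b| := by
      by_cases hc : (round (f ↑a) : ℝ) ≤ f ↑a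
      · have hc' : (round (f ↑b) : ℝ) ≤ f ↑b := h2.mp hc
        have e1 : t a = f ↑a - round (f ↑a) := abs_of_nonneg (by linarith)
        have e2 : t b = f ↑b - round (f ↑b) := abs_of_nonneg (by linarith)
        rw [e1, e2, h1]
        congr 1
        ring
      · have hc' : ¬ ((round (f ↑b) : ℝ) ≤ f ↑b) := fun h => hc (h2.mpr h)
        push_neg at hc hc'
        have e1 : t a = -(f ↑a - round (f ↑a)) := abs_of_neg (by linarith)
        have e2 : t b = -(f ↑b - round (f ↑b)) := abs_of_neg (by linarith)
        have e3 : -(f ↑a - (round (f ↑b):ℝ)) - -(f ↑b - (round (f ↑b):ℝ)) = -(f ↑a - f ↑b) := by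
          ring
        rw [e1, e2, h1, e3, abs_neg]
    have hlt : |t a - t b| < Δ := by
      have hfa : (k a : ℝ) ≤ t a / Δ := Nat.floor_le (div_nonneg (htnonneg a) hΔ.le)
      have hfb : (k b : ℝ) ≤ t b / Δ := Nat.floor_le (div_nonneg (htnonneg b) hΔ.le)
      have hfa' : t a / Δ < (k a : ℝ) + 1 := Nat.lt_floor_add_one _
      have hfb' : t b / Δ < (k b : ℝ) + 1 := Nat.lt_floor_add_one _
      rw [abs_sub_lt_iff]
      rw [← h3] at hfb hfb'
      have hab1 : t a / Δ - t b / Δ < 1 := by linarith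
      have hab2 : t b / Δ - t a / Δ < 1 := by linarith
      have e : ∀ u v : ℝ, u - v = (u/Δ - v/Δ) * Δ := by
        intro u v; field_simp
      constructor
      · rw [e (t a) (t b)]
        calc (t a/Δ - t b/Δ) * Δ < 1 * Δ := mul_lt_mul_of_pos_right hab1 hΔ
          _ = Δ := one_mul Δ
      · rw [e (t b) (t a)]
        calc (t b/Δ - t a/Δ) * Δ < 1 * Δ := mul_lt_mul_of_pos_right hab2 hΔ
          _ = Δ := one_mul Δ
    rw [habs, abs_sub_comm] at hlt
    linarith
  -- range
  set A : ℤ := ⌈P⌉ + 1 with hA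
  set K : ℕ := ⌊1/Δ⌋₊ with hK
  set M : Finset ℤ := Finset.Icc (-A) A with hM
  set S : Finset (ℤ × Bool × ℕ) := M ×ˢ ((Finset.univ : Finset Bool) ×ˢ Finset.range (K+1)) with hS
  have hφmem : ∀ n ∈ T, φ n ∈ S := by
    intro n hn
    have hfn : |f n| ≤ P := hfP n (hmem n hn)
    rw [hS, hφ, Finset.mem_product, Finset.mem_product]
    refine ⟨?_, Finset.mem_univ _, ?_⟩
    · rw [hM, Finset.mem_Icc, ← abs_le]
      have hr : |(round (f ↑n) : ℝ)| ≤ P + 1 := by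
        have h1 : |f ↑n - round (f ↑n)| ≤ 1/2 := abs_sub_round _
        have := abs_sub_abs_le_abs_sub (round (f ↑n) : ℝ) (f ↑n)
        rw [abs_sub_comm] at h1
        linarith
      have hPA : P + 1 ≤ (A:ℝ) := by
        rw [hA]; push_cast
        linarith [Int.le_ceil P]
      have : |(round (f ↑n) : ℝ)| ≤ (A:ℝ) := le_trans hr hPA
      rw [← Int.cast_abs] at this
      exact_mod_cast this
    · rw [Finset.mem_range, Nat.lt_succ_iff, hK]
      apply Nat.floor_le_floor
      have h1 : t n ≤ 1 := le_trans (hthalf n) (by norm_num)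
      have : t n / Δ ≤ 1 / Δ := by gcongr
      exact this
  -- sum chain
  have hcardM : (M.card : ℝ) ≤ 5 * (P + 1) := by
    have hA1 : (1:ℤ) ≤ A := by
      rw [hA]
      have : (0:ℤ) < ⌈P⌉ := Int.ceil_pos.mpr hP
      linarith
    have hcard : M.card = (2*A + 1).toNat := by
      rw [hM, Int.card_Icc]
      congr 1
      ring
    have hAP : (A:ℝ) ≤ P + 2 := by
      rw [hA]; push_cast
      linarith [Int.ceil_lt_add_one P]
    rw [hcard]
    have h2A : (0:ℤ) ≤ 2*A+1 := by linarith
    have : (((2*A+1).toNat : ℤ) : ℝ) = ((2*A+1 : ℤ) : ℝ) := by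
      rw [Int.toNat_of_nonneg h2A]
    push_cast at this ⊢
    rw [this]
    push_cast
    linarith
  have chain : (∑ n ∈ T, (if t n = 0 then Q else min Q (1 / t n)))
      ≤ (M.card : ℝ) * (2 * ∑ j ∈ Finset.range (K+1), w j) := by
    calc (∑ n ∈ T, (if t n = 0 then Q else min Q (1 / t n)))
        ≤ ∑ n ∈ T, w (k n) := Finset.sum_le_sum hterm
      _ = ∑ p ∈ T.image φ, w p.2.2 :=
          (Finset.sum_image (f := fun p : ℤ × Bool × ℕ => w p.2.2) (g := φ) (s := T)
            (fun a ha b hb h => hinj ha hb h)).symm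
      _ ≤ ∑ p ∈ S, w p.2.2 := by
          apply Finset.sum_le_sum_of_subset_of_nonneg
          · intro p hp
            obtain ⟨n, hn, rfl⟩ := Finset.mem_image.mp hp
            exact hφmem n hn
          · intro p _ _; exact hwnonneg _
      _ = (M.card : ℝ) * (2 * ∑ j ∈ Finset.range (K+1), w j) := by
          rw [hS, Finset.sum_product]
          have inner : ∀ x : ℤ,
              (∑ y ∈ (Finset.univ : Finset Bool) ×ˢ Finset.range (K+1), w (x, y).2.2)
              = 2 * ∑ j ∈ Finset.range (K+1), w j := by
            intro x
            rw [Finset.sum_product]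
            dsimp only
            rw [Finset.sum_const, Finset.card_univ, Fintype.card_bool, two_smul, two_mul]
          rw [Finset.sum_congr rfl (fun x _ => inner x), Finset.sum_const, nsmul_eq_mul]
  -- harmonic bound
  have hharm : ∑ j ∈ Finset.range (K+1), w j ≤ Q + (1/Δ) * (1 + Real.log K) := by
    rw [Finset.sum_range_succ']
    have h0 : w 0 = Q := by simp [hw]
    have hsucc : ∀ j, w (j+1) = (1/Δ) * (1/((j:ℝ)+1)) := by
      intro j; rw [hw]; simp only [Nat.succ_ne_zero, if_false]
      push_cast
      field_simp
    have : ∑ j ∈ Finset.range K, w (j+1) = (1/Δ) * ∑ j ∈ Finset.range K, (((j:ℝ))+1)⁻¹ := by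
      rw [Finset.mul_sum]
      apply Finset.sum_congr rfl
      intro j _
      rw [hsucc j, one_div ((j:ℝ)+1)]
    rw [h0, this]
    have hh : ∑ j ∈ Finset.range K, (((j:ℝ))+1)⁻¹ = ((harmonic K : ℚ) : ℝ) := by
      simp only [harmonic]
      push_cast
      rfl
    have hh2 : ((harmonic K : ℚ) : ℝ) ≤ 1 + Real.log K := harmonic_le_one_add_log K
    have hΔinv : (0:ℝ) < 1/Δ := by positivity
    rw [hh]
    nlinarith
  -- log comparisons
  set L : ℝ := Real.log (2 + 1/Δ) with hL
  have hΔinv : (0:ℝ) < 1/Δ := by positivity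
  have hlog2 : Real.log 2 ≤ L := by
    rw [hL]; apply Real.log_le_log two_pos; linarith
  have hhalf : (1:ℝ)/2 < Real.log 2 := by
    have := Real.log_two_gt_d9
    linarith
  have hLhalf : (1:ℝ)/2 < L := lt_of_lt_of_le hhalf hlog2
  have hLpos : (0:ℝ) < L := by linarith
  have hlogK : Real.log K ≤ L := by
    rcases Nat.eq_zero_or_pos K with h | h
    · rw [h]; simp; linarith
    · rw [hL]
      apply Real.log_le_log (by exact_mod_cast h)
      have : (K:ℝ) ≤ 1/Δ := Nat.floor_le hΔinv.le
      linarith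
  -- final assembly
  have hsum2 : ∑ j ∈ Finset.range (K+1), w j ≤ 3 * (Q + 1/Δ) * L := by
    have h1 : Q + (1/Δ) * (1 + Real.log K) ≤ Q + (1/Δ) * (1 + L) := by
      have := mul_le_mul_of_nonneg_left (add_le_add_left hlogK 1) hΔinv.le
      linarith
    have h2 : Q ≤ 2 * Q * L := by
      have := mul_le_mul_of_nonneg_left (show (1:ℝ) ≤ 2 * L by linarith) hQ0.le
      linarith
    have h3 : 1/Δ ≤ 2 * (1/Δ) * L := by
      have := mul_le_mul_of_nonneg_left (show (1:ℝ) ≤ 2 * L by linarith) hΔinv.le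
      linarith
    have hQL : 0 ≤ Q * L := mul_nonneg hQ0.le hLpos.le
    have hΔL : 0 ≤ (1/Δ) * L := mul_nonneg hΔinv.le hLpos.le
    linarith [hharm, h1, h2, h3]
  calc (∑ n ∈ T, (if t n = 0 then Q else min Q (1 / t n)))
      ≤ (M.card : ℝ) * (2 * ∑ j ∈ Finset.range (K+1), w j) := chain
    _ ≤ 5 * (P+1) * (2 * (3 * (Q + 1/Δ) * L)) := by
        apply mul_le_mul hcardM ?_ ?_ (by linarith)
        · have hnn : 0 ≤ ∑ j ∈ Finset.range (K+1), w j :=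
            Finset.sum_nonneg (fun j _ => hwnonneg j)
          linarith
        · positivity
    _ = 30 * (P + 1) * (Q + 1 / Δ) * L := by ring
end
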